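/- Let b > 0, k > 1 real, and a, c real satisfying 8b³(1−k) + 4b²a² + 4kcba + c²(k²−1) = 0. Then f₁(r) = 1 + ((2ab + (k−1)c)/(2b(k−1))) r solves r f'' + (−2b r² − (c/b) r + k − 1) f' + (2b r − a + (1−k)c/(2b)) f = 0 identically, and u(r) = r^{(k−1)/2} f₁(r) exp(−(c/(2b)) r − (b/2) r²) solves −u'' + [(k−1)(k−3)/(4r²) + a/r + c r + b² r²] u = (b(k+2) − c²/(4b²)) u on (0,∞). -/

import Mathlib

set_option maxHeartbeats 2000000 in
theorem stmt_12 (b a c k : ℝ) (hb : 0 < b) (hk : 1 < k)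
    (hcond : 8 * b ^ 3 * (1 - k) + 4 * b ^ 2 * a ^ 2 + 4 * k * c * b * a +
      c ^ 2 * (k ^ 2 - 1) = 0)
    (f : ℝ → ℝ)
    (hf : f = fun r : ℝ => 1 + ((2 * a * b + (k - 1) * c) / (2 * b * (k - 1))) * r)
    (u : ℝ → ℝ)
    (hu : u = fun r : ℝ =>
      r ^ ((k - 1) / 2) * f r * Real.exp (-(c / (2 * b)) * r - (b / 2) * r ^ 2)) :
    (∀ r : ℝ,
        r * deriv (deriv f) r +
          (-2 * b * r ^ 2 - (c / b) * r + k - 1) * deriv f r +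
          (2 * b * r - a + (1 - k) * c / (2 * b)) * f r = 0) ∧
    (∀ r ∈ Set.Ioi (0 : ℝ),
        -(deriv (deriv u) r) +
          ((k - 1) * (k - 3) / (4 * r ^ 2) + a / r + c * r + b ^ 2 * r ^ 2) * u r
          = (b * (k + 2) - c ^ 2 / (4 * b ^ 2)) * u r) := by
  have hb' : b ≠ 0 := hb.ne'
  have hk' : k - 1 ≠ 0 := sub_ne_zero.mpr hk.ne'
  set M : ℝ := (2 * a * b + (k - 1) * c) / (2 * b * (k - 1)) with hM
  have hfd : ∀ x : ℝ, HasDerivAt f M x := by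
    intro x
    rw [hf]
    simpa using ((hasDerivAt_id x).const_mul M).const_add 1
  have hf' : deriv f = fun _ => M := funext fun x => (hfd x).deriv
  have hexp : ∀ x : ℝ, HasDerivAt
      (fun r : ℝ => Real.exp (-(c / (2 * b)) * r - (b / 2) * r ^ 2))
      ((-(c / (2 * b)) - b * x) * Real.exp (-(c / (2 * b)) * x - (b / 2) * x ^ 2)) x := by
    intro x
    have hinner : HasDerivAt (fun r : ℝ => -(c / (2 * b)) * r - (b / 2) * r ^ 2)
        (-(c / (2 * b)) - b * x) x := by
      have h := ((hasDerivAt_id x).const_mul (-(c / (2 * b)))).sub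
        ((hasDerivAt_pow 2 x).const_mul (b / 2))
      refine h.congr_deriv ?_
      norm_num
      ring
    simpa [mul_comm] using hinner.exp
  constructor
  · intro r
    rw [hf']
    simp only [deriv_const']
    rw [hf]
    simp only
    rw [hM]
    field_simp
    linear_combination (-r) * hcond
  · -- second part
    set U1 : ℝ → ℝ := fun r =>
      (((k - 1) / 2) * r ^ ((k - 1) / 2 - 1) * f r + r ^ ((k - 1) / 2) * M) *
          Real.exp (-(c / (2 * b)) * r - (b / 2) * r ^ 2) +
        (r ^ ((k - 1) / 2) * f r) *
          ((-(c / (2 * b)) - b * r) * Real.exp (-(c / (2 * b)) * r - (b / 2) * r ^ 2)) with hU1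
    have hu1 : ∀ x ∈ Set.Ioi (0 : ℝ), HasDerivAt u (U1 x) x := by
      intro x hx
      have hx' : (0 : ℝ) < x := hx
      rw [hu]
      exact ((Real.hasDerivAt_rpow_const (p := (k - 1) / 2) (Or.inl hx'.ne')).mul
        (hfd x)).mul (hexp x)
    intro x hx
    have hx' : (0 : ℝ) < x := hx
    have hxne : x ≠ 0 := hx'.ne'
    have hdu : Set.EqOn (deriv u) U1 (Set.Ioi 0) := fun y hy => (hu1 y hy).deriv
    have hev : deriv u =ᶠ[nhds x] U1 :=
      Filter.eventuallyEq_of_mem (isOpen_Ioi.mem_nhds hx) hdu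
    have hdd : deriv (deriv u) x = deriv U1 x := hev.deriv_eq
    -- differentiate U1 at x
    have hA1 : HasDerivAt (fun r : ℝ => ((k - 1) / 2) * r ^ ((k - 1) / 2 - 1) * f r)
        ((((k - 1) / 2) * (((k - 1) / 2 - 1) * x ^ ((k - 1) / 2 - 1 - 1))) * f x +
          ((k - 1) / 2) * x ^ ((k - 1) / 2 - 1) * M) x :=
      ((Real.hasDerivAt_rpow_const (p := (k - 1) / 2 - 1) (Or.inl hxne)).const_mul
        ((k - 1) / 2)).mul (hfd x)
    have hA2 : HasDerivAt (fun r : ℝ => r ^ ((k - 1) / 2) * M)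
        ((((k - 1) / 2) * x ^ ((k - 1) / 2 - 1)) * M) x :=
      (Real.hasDerivAt_rpow_const (p := (k - 1) / 2) (Or.inl hxne)).mul_const M
    have hA := hA1.add hA2
    have hB : HasDerivAt (fun r : ℝ => r ^ ((k - 1) / 2) * f r)
        (((k - 1) / 2) * x ^ ((k - 1) / 2 - 1) * f x + x ^ ((k - 1) / 2) * M) x :=
      (Real.hasDerivAt_rpow_const (p := (k - 1) / 2) (Or.inl hxne)).mul (hfd x)
    have hw : HasDerivAt (fun r : ℝ => -(c / (2 * b)) - b * r) (-b) x := by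
      simpa using (HasDerivAt.const_sub (-(c / (2 * b))) ((hasDerivAt_id x).const_mul b))
    have hwE := hw.mul (hexp x)
    have hU1d := (hA.mul (hexp x)).add (hB.mul hwE)
    rw [hdd, (show HasDerivAt U1 _ x from hU1d).deriv, hu]
    simp only [Pi.add_apply, Pi.mul_apply]
    have e1 : x ^ ((k - 1) / 2 - 1) = x ^ ((k - 1) / 2) / x := by
      rw [Real.rpow_sub hx', Real.rpow_one]
    have e2 : x ^ ((k - 1) / 2 - 1 - 1) = x ^ ((k - 1) / 2) / x ^ 2 := by
      rw [show (k - 1) / 2 - 1 - 1 = (k - 1) / 2 - 2 by ring, Real.rpow_sub hx',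
        show ((2 : ℝ)) = ((2 : ℕ) : ℝ) by norm_num, Real.rpow_natCast]
    rw [e2, e1, hf]
    simp only
    rw [hM]
    set T := x ^ ((k - 1) / 2) with hT
    set E := Real.exp (-(c / (2 * b)) * x - b / 2 * x ^ 2) with hEe
    field_simp
    linear_combination (8 * T * E * b * x ^ 2) * hcond
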